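/- Let E be a rank n bundle with ψ having a simple rank-one pole at p with nonzero trace residue, in the normal form where only the (1,1) entry is singular. Then the sheaf End(E)_ψ of endomorphism-valued deformations (sections φ of End(E)(C) locally of the form ψ'_reg + [α, ψ] with α, ψ'_reg holomorphic) coincides near p with the sheaf of End(E)-valued sections allowed simple poles precisely in the (1,j) and (j,1) entries for j ≠ 1. -/

import Mathlib

/-- The subring of holomorphic germs (convergent/formal power series in x) inside the
field of Laurent series in the local coordinate x. -/
noncomputable def holGerms : Subring (LaurentSeries ℂ) :=
  (HahnSeries.ofPowerSeries ℤ ℂ : PowerSeries ℂ →+* LaurentSeries ℂ).range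

/-- The local coordinate x at the point p, as a Laurent series. -/
noncomputable def xCoord : LaurentSeries ℂ :=
  HahnSeries.ofPowerSeries ℤ ℂ PowerSeries.X


lemma xCoord_mem : xCoord ∈ holGerms := ⟨PowerSeries.X, rfl⟩

lemma C_mem (a : ℂ) : HahnSeries.C a ∈ holGerms :=
  ⟨PowerSeries.C a, HahnSeries.ofPowerSeries_C a⟩

lemma xCoord_ne_zero : xCoord ≠ 0 := by
  intro h
  apply PowerSeries.X_ne_zero (R := ℂ)
  apply HahnSeries.ofPowerSeries_injective (Γ := ℤ)
  rw [show (HahnSeries.ofPowerSeries ℤ ℂ) PowerSeries.X = xCoord from rfl, h, map_zero]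

lemma x_mul_inv : xCoord * xCoord⁻¹ = 1 := mul_inv_cancel₀ xCoord_ne_zero
lemma inv_mul_x : xCoord⁻¹ * xCoord = 1 := inv_mul_cancel₀ xCoord_ne_zero


/-!
STATEMENT 17. E rank n, ψ with a simple rank-one pole at p with nonzero trace
residue, in the normal form (trivializing E near p and K_X by dx) where only the
(1,1) entry is singular: ψ = diag(a₋₁x⁻¹ + a₀ + …, A₀ + A₁x + …).  Then the sheaf
End(E)_ψ — sections locally of the form ψ'_reg + [α,ψ] with α, ψ'_reg holomorphic —
coincides near p with the sheaf of End(E)-valued sections allowed simple poles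
precisely in the (1,j) and (j,1) entries, j ≠ 1.

Model: matrices over the field of Laurent series in x, holomorphic entries being
those in `holGerms`.  Indices are `Fin n` with the first row/column indexed by 0.
The left-hand side is the set of matrices β + [α,ψ] with α, β holomorphic; the
right-hand side is the set of matrices holomorphic in the (0,0) entry and in all
entries (i,j) with i,j ≠ 0, and with at worst simple poles (x·entry holomorphic)
in the remaining first-row and first-column entries.
-/
theorem stmt17
    (n : ℕ) [NeZero n]
    (aRes : ℂ) (h_res_ne : aRes ≠ 0)
    (h₀ : LaurentSeries ℂ) (h_h₀ : h₀ ∈ holGerms)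
    (ψ : Matrix (Fin n) (Fin n) (LaurentSeries ℂ))
    (hψ00 : ψ 0 0 = HahnSeries.C aRes * (xCoord)⁻¹ + h₀)
    (hψrow : ∀ j : Fin n, j ≠ 0 → ψ 0 j = 0)
    (hψcol : ∀ j : Fin n, j ≠ 0 → ψ j 0 = 0)
    (hψint : ∀ i j : Fin n, i ≠ 0 → j ≠ 0 → ψ i j ∈ holGerms) :
    {M : Matrix (Fin n) (Fin n) (LaurentSeries ℂ) |
        ∃ α β : Matrix (Fin n) (Fin n) (LaurentSeries ℂ),
          (∀ i j, α i j ∈ holGerms) ∧ (∀ i j, β i j ∈ holGerms) ∧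
          M = β + (α * ψ - ψ * α)} =
    {M : Matrix (Fin n) (Fin n) (LaurentSeries ℂ) |
        M 0 0 ∈ holGerms ∧
        (∀ i j : Fin n, i ≠ 0 → j ≠ 0 → M i j ∈ holGerms) ∧
        (∀ j : Fin n, j ≠ 0 → xCoord * M 0 j ∈ holGerms ∧ xCoord * M j 0 ∈ holGerms)} := by
  have hCC : (HahnSeries.C aRes : LaurentSeries ℂ) * HahnSeries.C aRes⁻¹ = 1 := by
    rw [← map_mul (HahnSeries.C : ℂ →+* LaurentSeries ℂ), mul_inv_cancel₀ h_res_ne, map_one]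
  -- x * ψ00 is holomorphic form
  have hxψ : xCoord * ψ 0 0 = HahnSeries.C aRes + xCoord * h₀ := by
    rw [hψ00, mul_add, ← mul_assoc, mul_comm xCoord (HahnSeries.C aRes), mul_assoc, x_mul_inv, mul_one]
  ext M
  simp only [Set.mem_setOf_eq]
  constructor
  · rintro ⟨α, β, hα, hβ, rfl⟩
    -- entry formulas
    have hmul : ∀ i j, (β + (α * ψ - ψ * α)) i j
        = β i j + ((∑ k, α i k * ψ k j) - ∑ k, ψ i k * α k j) := by
      intro i j
      simp [Matrix.add_apply, Matrix.sub_apply, Matrix.mul_apply]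
    -- column sums: ∑ k, α i k * ψ k 0 = α i 0 * ψ 0 0
    have hcol : ∀ i, (∑ k, α i k * ψ k 0) = α i 0 * ψ 0 0 := by
      intro i
      apply Finset.sum_eq_single 0
      · intro k _ hk; rw [hψcol k hk, mul_zero]
      · intro h; exact absurd (Finset.mem_univ 0) h
    have hrow : ∀ j, (∑ k, ψ 0 k * α k j) = ψ 0 0 * α 0 j := by
      intro j
      apply Finset.sum_eq_single 0
      · intro k _ hk; rw [hψrow k hk, zero_mul]
      · intro h; exact absurd (Finset.mem_univ 0) h
    -- interior sums are holomorphic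
    have hint1 : ∀ i j, j ≠ 0 → (∑ k, α i k * ψ k j) ∈ holGerms := by
      intro i j hj
      apply Subring.sum_mem
      intro k _
      by_cases hk : k = 0
      · subst hk; rw [hψrow j hj, mul_zero]; exact Subring.zero_mem _
      · exact Subring.mul_mem _ (hα i k) (hψint k j hk hj)
    have hint2 : ∀ i j, i ≠ 0 → (∑ k, ψ i k * α k j) ∈ holGerms := by
      intro i j hi
      apply Subring.sum_mem
      intro k _
      by_cases hk : k = 0
      · subst hk; rw [hψcol i hi, zero_mul]; exact Subring.zero_mem _
      · exact Subring.mul_mem _ (hψint i k hi hk) (hα k j)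
    refine ⟨?_, ?_, ?_⟩
    · rw [hmul, hcol 0, hrow 0, mul_comm, sub_self, add_zero]; exact hβ 0 0
    · intro i j hi hj
      rw [hmul]
      exact Subring.add_mem _ (hβ i j) (Subring.sub_mem _ (hint1 i j hj) (hint2 i j hi))
    · intro j hj
      constructor
      · rw [hmul, hrow j, mul_add, mul_sub, ← mul_assoc, hxψ]
        refine Subring.add_mem _ (Subring.mul_mem _ xCoord_mem (hβ 0 j)) ?_
        refine Subring.sub_mem _ (Subring.mul_mem _ xCoord_mem (hint1 0 j hj)) ?_
        exact Subring.mul_mem _ (Subring.add_mem _ (C_mem aRes)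
          (Subring.mul_mem _ xCoord_mem h_h₀)) (hα 0 j)
      · rw [hmul, hcol j, mul_comm (α j 0) (ψ 0 0), mul_add, mul_sub, ← mul_assoc, hxψ]
        refine Subring.add_mem _ (Subring.mul_mem _ xCoord_mem (hβ j 0)) ?_
        refine Subring.sub_mem _ ?_ (Subring.mul_mem _ xCoord_mem (hint2 j 0 hj))
        exact Subring.mul_mem _ (Subring.add_mem _ (C_mem aRes)
          (Subring.mul_mem _ xCoord_mem h_h₀)) (hα j 0)
  · rintro ⟨h1, h2, h3⟩
    set α : Matrix (Fin n) (Fin n) (LaurentSeries ℂ) :=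
      Matrix.of fun i j =>
        if j = 0 then
          (if i = 0 then 0 else HahnSeries.C aRes⁻¹ * (xCoord * M i 0))
        else
          (if i = 0 then -(HahnSeries.C aRes⁻¹ * (xCoord * M 0 j)) else 0) with hαdef
    have hα : ∀ i j, α i j ∈ holGerms := by
      intro i j
      by_cases hj : j = 0
      · by_cases hi : i = 0
        · simp [hαdef, hi, hj, Subring.zero_mem]
        · simp only [hαdef, Matrix.of_apply, if_pos hj, if_neg hi]
          exact Subring.mul_mem _ (C_mem _) ((h3 i hi).2)
      · by_cases hi : i = 0
        · simp only [hαdef, Matrix.of_apply, if_neg hj, if_pos hi]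
          exact Subring.neg_mem _ (Subring.mul_mem _ (C_mem _) ((h3 j hj).1))
        · simp [hαdef, hj, hi, Subring.zero_mem]
    refine ⟨α, M - (α * ψ - ψ * α), hα, ?_, by abel⟩
    intro i j
    have hentry : (M - (α * ψ - ψ * α)) i j
        = M i j - ((∑ k, α i k * ψ k j) - ∑ k, ψ i k * α k j) := by
      simp [Matrix.sub_apply, Matrix.mul_apply]
    rw [hentry]
    by_cases hi : i = 0 <;> by_cases hj : j = 0
    · -- (0,0)
      subst hi; subst hj
      have e1 : (∑ k, α 0 k * ψ k 0) = α 0 0 * ψ 0 0 := by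
        apply Finset.sum_eq_single 0
        · intro k _ hk; rw [hψcol k hk, mul_zero]
        · intro h; exact absurd (Finset.mem_univ 0) h
      have e2 : (∑ k, ψ 0 k * α k 0) = ψ 0 0 * α 0 0 := by
        apply Finset.sum_eq_single 0
        · intro k _ hk; rw [hψrow k hk, zero_mul]
        · intro h; exact absurd (Finset.mem_univ 0) h
      rw [e1, e2, mul_comm, sub_self, sub_zero]
      exact h1
    · -- (0,j), j ≠ 0
      subst hi
      have e2 : (∑ k, ψ 0 k * α k j) = ψ 0 0 * α 0 j := by
        apply Finset.sum_eq_single 0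
        · intro k _ hk; rw [hψrow k hk, zero_mul]
        · intro h; exact absurd (Finset.mem_univ 0) h
      have hα0j : α 0 j = -(HahnSeries.C aRes⁻¹ * (xCoord * M 0 j)) := by
        simp [hαdef, hj]
      have key : ψ 0 0 * (HahnSeries.C aRes⁻¹ * (xCoord * M 0 j))
          = M 0 j + h₀ * (HahnSeries.C aRes⁻¹ * (xCoord * M 0 j)) := by
        rw [hψ00]
        linear_combination ((xCoord⁻¹ * xCoord) * (M 0 j)) * hCC + (M 0 j) * inv_mul_x
      have hsum : (∑ k, α 0 k * ψ k j) ∈ holGerms := by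
        apply Subring.sum_mem
        intro k _
        by_cases hk : k = 0
        · subst hk; rw [hψrow j hj, mul_zero]; exact Subring.zero_mem _
        · exact Subring.mul_mem _ (hα 0 k) (hψint k j hk hj)
      have reshape : M 0 j - ((∑ k, α 0 k * ψ k j) - ψ 0 0 * α 0 j)
          = -(∑ k, α 0 k * ψ k j) - h₀ * (HahnSeries.C aRes⁻¹ * (xCoord * M 0 j)) := by
        rw [hα0j]; linear_combination -key
      rw [e2, reshape]
      refine Subring.sub_mem _ (Subring.neg_mem _ hsum) ?_
      exact Subring.mul_mem _ h_h₀ (Subring.mul_mem _ (C_mem _) ((h3 j hj).1))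
    · -- (i,0), i ≠ 0
      subst hj
      have e1 : (∑ k, α i k * ψ k 0) = α i 0 * ψ 0 0 := by
        apply Finset.sum_eq_single 0
        · intro k _ hk; rw [hψcol k hk, mul_zero]
        · intro h; exact absurd (Finset.mem_univ 0) h
      have hαi0 : α i 0 = HahnSeries.C aRes⁻¹ * (xCoord * M i 0) := by
        simp [hαdef, hi]
      have key : HahnSeries.C aRes⁻¹ * (xCoord * M i 0) * ψ 0 0
          = M i 0 + h₀ * (HahnSeries.C aRes⁻¹ * (xCoord * M i 0)) := by
        rw [hψ00]
        linear_combination ((xCoord⁻¹ * xCoord) * (M i 0)) * hCC + (M i 0) * inv_mul_x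
      rw [e1, hαi0, key]
      have hsum : (∑ k, ψ i k * α k 0) ∈ holGerms := by
        apply Subring.sum_mem
        intro k _
        by_cases hk : k = 0
        · subst hk; rw [hψcol i hi, zero_mul]; exact Subring.zero_mem _
        · refine Subring.mul_mem _ (hψint i k hi hk) ?_
          rw [show α k 0 = HahnSeries.C aRes⁻¹ * (xCoord * M k 0) by simp [hαdef, hk]]
          exact Subring.mul_mem _ (C_mem _) ((h3 k hk).2)
      have : M i 0 - (M i 0 + h₀ * (HahnSeries.C aRes⁻¹ * (xCoord * M i 0)) - ∑ k, ψ i k * α k 0)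
          = (∑ k, ψ i k * α k 0) - h₀ * (HahnSeries.C aRes⁻¹ * (xCoord * M i 0)) := by ring
      rw [this]
      refine Subring.sub_mem _ hsum ?_
      exact Subring.mul_mem _ h_h₀ (Subring.mul_mem _ (C_mem _) ((h3 i hi).2))
    · -- (i,j), i,j ≠ 0
      have e1 : (∑ k, α i k * ψ k j) = 0 := by
        apply Finset.sum_eq_zero
        intro k _
        by_cases hk : k = 0
        · subst hk; rw [hψrow j hj, mul_zero]
        · rw [show α i k = 0 by simp [hαdef, hk, hi], zero_mul]
      have e2 : (∑ k, ψ i k * α k j) = 0 := by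
        apply Finset.sum_eq_zero
        intro k _
        by_cases hk : k = 0
        · subst hk; rw [hψcol i hi, zero_mul]
        · rw [show α k j = 0 by simp [hαdef, hk, hj], mul_zero]
      rw [e1, e2, sub_zero, sub_zero]
      exact h2 i j hi hj
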